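/- Let N(x,t) = Σ_{i≥1} h_i(x) t^i/i! be the exponential generating function of the polynomials h_i(x) defined by the nest-counting formula (h_n(x) = Σ over nests S on [n] with c(S)=1 and μ ∈ M_S of x^{||μ||}). Then N satisfies the functional equation (1 − x)·x^d·t + (1 − x^{d+1}) = exp(x^d N) − x^{d+1}·exp(N), as formal power series in t with coefficients in ℚ(x). -/

import Mathlib

open Finset

/-- A nest on `[n]`: a collection of nonempty subsets of `[n]` containing all
singletons, such that any two elements are disjoint or nested. -/
def IsNest (n : ℕ) (S : Finset (Finset (Fin n))) : Prop :=
  (∀ i : Fin n, {i} ∈ S) ∧ (∀ I ∈ S, I.Nonempty) ∧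
    (∀ I ∈ S, ∀ J ∈ S, I ∩ J = ∅ ∨ I ⊆ J ∨ J ⊆ I)

/-- The inclusion-maximal elements of `S`. -/
def maxElems (n : ℕ) (S : Finset (Finset (Fin n))) : Finset (Finset (Fin n)) :=
  S.filter (fun I => ∀ J ∈ S, I ⊆ J → I = J)

/-- `c(S)`, the number of maximal elements of `S`. -/
def numMax (n : ℕ) (S : Finset (Finset (Fin n))) : ℕ := (maxElems n S).card

/-- The sons of `I` in `S`: maximal elements of `{J ∈ S : J ⊊ I}`. -/
def sons (n : ℕ) (S : Finset (Finset (Fin n))) (I : Finset (Fin n)) :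
    Finset (Finset (Fin n)) :=
  S.filter (fun J => J ⊂ I ∧ ∀ K ∈ S, K ⊂ I → J ⊆ K → J = K)

/-- `S°`: the non-singleton elements of `S`. -/
def nestInterior (n : ℕ) (S : Finset (Finset (Fin n))) : Finset (Finset (Fin n)) :=
  S.filter (fun I => 2 ≤ I.card)

/-- `σ_k(x) = Σ_{i=1}^{dk-1} x^i` (so `σ_0 = 0`). -/
noncomputable def sigmaPoly (d k : ℕ) : Polynomial ℤ :=
  ∑ i ∈ Finset.Icc 1 (d * k - 1), Polynomial.X ^ i

open Classical in
/-- `h_n(x) = Σ_{S, μ} x^{‖μ‖}` over nests `S` on `[n]` with `c(S) = 1` and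
`μ ∈ M_S`, i.e. `μ : S° → ℤ` with `1 ≤ μ_I ≤ d(c_I - 1) - 1`. -/
noncomputable def hpoly (d n : ℕ) : Polynomial ℤ :=
  ∑ S ∈ Finset.univ.filter (fun S => IsNest n S ∧ numMax n S = 1),
    ∑ μ ∈ (nestInterior n S).pi (fun I => Finset.Icc 1 (d * ((sons n S I).card - 1) - 1)),
      Polynomial.X ^ (∑ I ∈ (nestInterior n S).attach, μ I.1 I.2)

/-- The formal exponential `exp(f)` of a power series `f` with zero constant
term: its `n`-th coefficient is `Σ_{k=0}^{n} (1/k!)·[t^n](f^k)` (terms with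
`k > n` vanish since `f` has zero constant term). -/
noncomputable def pexp {K : Type*} [CommRing K] [Algebra ℚ K] (f : PowerSeries K) :
    PowerSeries K :=
  PowerSeries.mk fun n =>
    ∑ k ∈ Finset.range (n + 1), (k.factorial : ℚ)⁻¹ • PowerSeries.coeff (R := K) n (f ^ k)

/-- The EGF `N(x,t) = Σ_{i≥1} h_i(x) t^i/i!` of the nest polynomials, as a power
series in `t` over `ℚ(x)`. -/
noncomputable def Npow (d : ℕ) : PowerSeries (RatFunc ℚ) :=
  PowerSeries.mk fun i =>
    if i = 0 then 0 else
      algebraMap (Polynomial ℚ) (RatFunc ℚ) ((hpoly d i).map (Int.castRingHom ℚ))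
        / (i.factorial : RatFunc ℚ)

/-! ### Generalized nests on a finset of an arbitrary type -/

section Nests

variable {α : Type*} [DecidableEq α]

/-- Nest on ground set `B`. -/
def NestOn (B : Finset α) (S : Finset (Finset α)) : Prop :=
  (∀ i ∈ B, ({i} : Finset α) ∈ S) ∧ (∀ I ∈ S, I.Nonempty ∧ I ⊆ B) ∧
    (∀ I ∈ S, ∀ J ∈ S, I ∩ J = ∅ ∨ I ⊆ J ∨ J ⊆ I)

/-- Inclusion-maximal elements (generalized `maxElems`). -/
def gmax (S : Finset (Finset α)) : Finset (Finset α) :=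
  S.filter (fun I => ∀ J ∈ S, I ⊆ J → I = J)

/-- Sons (generalized `sons`). -/
def gsons (S : Finset (Finset α)) (I : Finset α) : Finset (Finset α) :=
  S.filter (fun J => J ⊂ I ∧ ∀ K ∈ S, K ⊂ I → J ⊆ K → J = K)

/-- The multiplicative weight of a nest. -/
noncomputable def gW (d : ℕ) (S : Finset (Finset α)) : Polynomial ℤ :=
  ∏ I ∈ S.filter (fun I => 2 ≤ I.card), sigmaPoly d ((gsons S I).card - 1)

open Classical in
/-- Weighted count of nests with unique maximal element `B`. -/
noncomputable def hOn [Fintype α] (d : ℕ) (B : Finset α) : Polynomial ℤ :=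
  ∑ S ∈ Finset.univ.filter (fun S => NestOn B S ∧ gmax S = {B}), gW d S

/-- `A` is a partition of `B`. -/
def IsPartOf (B : Finset α) (A : Finset (Finset α)) : Prop :=
  (∀ J ∈ A, J.Nonempty) ∧ (∀ J ∈ A, ∀ K ∈ A, J ≠ K → J ∩ K = ∅) ∧ A.biUnion id = B

theorem exists_gmax (S : Finset (Finset α)) {I : Finset α} (hI : I ∈ S) :
    ∃ K ∈ gmax S, I ⊆ K := by
  classical
  have hne : (S.filter (fun K => I ⊆ K)).Nonempty := ⟨I, by simp [hI]⟩
  obtain ⟨K, hK, hmax⟩ := Finset.exists_max_image _ Finset.card hne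
  rw [Finset.mem_filter] at hK
  refine ⟨K, ?_, hK.2⟩
  rw [gmax, Finset.mem_filter]
  refine ⟨hK.1, fun J hJ hKJ => ?_⟩
  have hJm : J ∈ S.filter (fun K => I ⊆ K) := by
    simp [hJ, hK.2.trans hKJ]
  exact Finset.eq_of_subset_of_card_le hKJ (hmax J hJm)

theorem gmax_subset (S : Finset (Finset α)) : gmax S ⊆ S := Finset.filter_subset _ _

theorem mem_ground_of_gmax {B : Finset α} {S : Finset (Finset α)}
    (hmax : gmax S = {B}) : B ∈ S :=
  gmax_subset S (hmax ▸ Finset.mem_singleton_self B)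

theorem gmax_card_one_iff {B : Finset α} {S : Finset (Finset α)} (hS : NestOn B S)
    (hB : B.Nonempty) : (gmax S).card = 1 ↔ gmax S = {B} := by
  constructor
  · intro h
    obtain ⟨M, hM⟩ := Finset.card_eq_one.1 h
    have hMS : M ∈ S := gmax_subset S (hM ▸ Finset.mem_singleton_self M)
    have hBM : B ⊆ M := by
      intro i hi
      obtain ⟨K, hK, hsub⟩ := exists_gmax S (hS.1 i hi)
      rw [hM, Finset.mem_singleton] at hK
      subst hK
      exact hsub (Finset.mem_singleton_self i)
    have hMB : M ⊆ B := (hS.2.1 M hMS).2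
    rw [hM, Finset.Subset.antisymm hMB hBM]
  · intro h; rw [h]; exact Finset.card_singleton B

theorem exists_son {B : Finset α} {S : Finset (Finset α)} (hS : NestOn B S)
    (hmax : gmax S = {B}) {I : Finset α} (hI : I ∈ S) (hne : I ≠ B) :
    ∃ J ∈ gsons S B, I ⊆ J := by
  classical
  have hne' : (S.filter (fun K => I ⊆ K ∧ K ≠ B)).Nonempty := ⟨I, by simp [hI, hne]⟩
  obtain ⟨J, hJ, hmx⟩ := Finset.exists_max_image _ Finset.card hne'
  rw [Finset.mem_filter] at hJ
  refine ⟨J, ?_, hJ.2.1⟩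
  rw [gsons, Finset.mem_filter]
  refine ⟨hJ.1, Finset.ssubset_iff_subset_ne.2 ⟨(hS.2.1 J hJ.1).2, hJ.2.2⟩, ?_⟩
  intro K hK hKB hJK
  rcases eq_or_ne K B with h | h
  · exact absurd (h ▸ hKB) (lt_irrefl _)
  have hKm : K ∈ S.filter (fun K => I ⊆ K ∧ K ≠ B) := by
    simp [hK, hJ.2.1.trans hJK, h]
  exact Finset.eq_of_subset_of_card_le hJK (hmx K hKm)

theorem gsons_subset (S : Finset (Finset α)) (I : Finset α) : gsons S I ⊆ S :=
  Finset.filter_subset _ _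

theorem ssubset_of_mem_gsons {S : Finset (Finset α)} {I J : Finset α}
    (hJ : J ∈ gsons S I) : J ⊂ I := (Finset.mem_filter.1 hJ).2.1

theorem gsons_disj {B : Finset α} {S : Finset (Finset α)} (hS : NestOn B S)
    {J K : Finset α} (hJ : J ∈ gsons S B) (hK : K ∈ gsons S B) (hne : J ≠ K) :
    J ∩ K = ∅ := by
  rw [gsons, Finset.mem_filter] at hJ hK
  rcases hS.2.2 J hJ.1 K hK.1 with h | h | h
  · exact h
  · exact absurd (hJ.2.2 K hK.1 hK.2.1 h) hne
  · exact absurd (hK.2.2 J hJ.1 hJ.2.1 h).symm hne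

theorem gsons_isPart {B : Finset α} {S : Finset (Finset α)} (hS : NestOn B S)
    (hmax : gmax S = {B}) (h2 : 2 ≤ B.card) : IsPartOf B (gsons S B) := by
  refine ⟨fun J hJ => (hS.2.1 J (gsons_subset S B hJ)).1,
    fun J hJ K hK hne => gsons_disj hS hJ hK hne, ?_⟩
  apply Finset.Subset.antisymm
  · intro i hi
    rw [Finset.mem_biUnion] at hi
    obtain ⟨J, hJ, hiJ⟩ := hi
    exact (ssubset_of_mem_gsons hJ).1 hiJ
  · intro i hi
    have hsing : ({i} : Finset α) ∈ S := hS.1 i hi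
    have hne : ({i} : Finset α) ≠ B := by
      intro h
      rw [← h, Finset.card_singleton] at h2
      omega
    obtain ⟨J, hJ, hsub⟩ := exists_son hS hmax hsing hne
    exact Finset.mem_biUnion.2 ⟨J, hJ, hsub (Finset.mem_singleton_self i)⟩

theorem isPart_card_ge2 {B : Finset α} {A : Finset (Finset α)} (hA : IsPartOf B A)
    (hne : ∀ J ∈ A, J ≠ B) (hB : B.Nonempty) : 2 ≤ A.card := by
  rcases Nat.lt_or_ge A.card 2 with h | h
  · interval_cases h' : A.card
    · rw [Finset.card_eq_zero] at h'
      subst h'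
      simp only [IsPartOf, Finset.biUnion_empty] at hA
      exact absurd hA.2.2.symm (Finset.nonempty_iff_ne_empty.1 hB)
    · obtain ⟨J, hJ⟩ := Finset.card_eq_one.1 h'
      subst hJ
      have : J = B := by
        have := hA.2.2
        simpa using this
      exact absurd this (hne J (Finset.mem_singleton_self J))
  · exact h

theorem nestOn_filter {B : Finset α} {S : Finset (Finset α)} (hS : NestOn B S)
    {J : Finset α} (hJ : J ∈ S) : NestOn J (S.filter (· ⊆ J)) := by
  refine ⟨fun i hi => ?_, fun I hI => ?_, fun I hI K hK => ?_⟩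
  · rw [Finset.mem_filter]
    exact ⟨hS.1 i ((hS.2.1 J hJ).2 hi), Finset.singleton_subset_iff.2 hi⟩
  · rw [Finset.mem_filter] at hI
    exact ⟨(hS.2.1 I hI.1).1, hI.2⟩
  · rw [Finset.mem_filter] at hI hK
    exact hS.2.2 I hI.1 K hK.1

theorem gmax_filter {B : Finset α} {S : Finset (Finset α)} (hS : NestOn B S)
    {J : Finset α} (hJ : J ∈ S) : gmax (S.filter (· ⊆ J)) = {J} := by
  have hJm : J ∈ S.filter (· ⊆ J) := Finset.mem_filter.2 ⟨hJ, Finset.Subset.refl J⟩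
  ext I
  rw [gmax, Finset.mem_filter, Finset.mem_singleton]
  constructor
  · rintro ⟨hI, hmax⟩
    exact hmax J hJm (Finset.mem_filter.1 hI).2
  · rintro rfl
    exact ⟨hJm, fun K hK hJK => Finset.Subset.antisymm hJK (Finset.mem_filter.1 hK).2⟩

theorem gsons_filter {S : Finset (Finset α)} {I J : Finset α} (hIJ : I ⊆ J) :
    gsons (S.filter (· ⊆ J)) I = gsons S I := by
  ext K
  constructor
  · intro h
    rw [gsons, Finset.mem_filter] at h
    obtain ⟨hK1, hKI, hmax⟩ := h
    rw [Finset.mem_filter] at hK1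
    rw [gsons, Finset.mem_filter]
    refine ⟨hK1.1, hKI, fun L hL hLI hKL => ?_⟩
    refine hmax L (Finset.mem_filter.2 ⟨hL, hLI.subset.trans hIJ⟩) hLI hKL
  · intro h
    rw [gsons, Finset.mem_filter] at h
    obtain ⟨hK1, hKI, hmax⟩ := h
    rw [gsons, Finset.mem_filter]
    refine ⟨Finset.mem_filter.2 ⟨hK1, hKI.subset.trans hIJ⟩, hKI,
      fun L hL hLI hKL => hmax L (Finset.mem_filter.1 hL).1 hLI hKL⟩

theorem nest_decomp {B : Finset α} {S : Finset (Finset α)} (hS : NestOn B S)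
    (hmax : gmax S = {B}) (h2 : 2 ≤ B.card) :
    S = insert B ((gsons S B).biUnion (fun J => S.filter (· ⊆ J))) := by
  ext I
  rw [Finset.mem_insert, Finset.mem_biUnion]
  constructor
  · intro hI
    rcases eq_or_ne I B with h | h
    · exact Or.inl h
    · obtain ⟨J, hJ, hsub⟩ := exists_son hS hmax hI h
      exact Or.inr ⟨J, hJ, Finset.mem_filter.2 ⟨hI, hsub⟩⟩
  · rintro (rfl | ⟨J, hJ, hIJ⟩)
    · exact mem_ground_of_gmax hmax
    · exact (Finset.mem_filter.1 hIJ).1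

theorem gW_decomp (d : ℕ) {B : Finset α} {S : Finset (Finset α)} (hS : NestOn B S)
    (hmax : gmax S = {B}) (h2 : 2 ≤ B.card) :
    gW d S = sigmaPoly d ((gsons S B).card - 1)
      * ∏ J ∈ gsons S B, gW d (S.filter (· ⊆ J)) := by
  classical
  have hdecomp : S.filter (fun I => 2 ≤ I.card)
      = insert B ((gsons S B).biUnion
          (fun J => (S.filter (· ⊆ J)).filter (fun I => 2 ≤ I.card))) := by
    conv_lhs => rw [nest_decomp hS hmax h2]
    rw [Finset.filter_insert, if_pos h2, Finset.filter_biUnion]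
  have hBnot : B ∉ (gsons S B).biUnion
      (fun J => (S.filter (· ⊆ J)).filter (fun I => 2 ≤ I.card)) := by
    intro h
    rw [Finset.mem_biUnion] at h
    obtain ⟨J, hJ, hBJ⟩ := h
    rw [Finset.mem_filter, Finset.mem_filter] at hBJ
    exact (ssubset_of_mem_gsons hJ).2 hBJ.1.2
  have hdisj : ∀ J ∈ gsons S B, ∀ K ∈ gsons S B, J ≠ K →
      Disjoint ((S.filter (· ⊆ J)).filter (fun I => 2 ≤ I.card))
        ((S.filter (· ⊆ K)).filter (fun I => 2 ≤ I.card)) := by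
    intro J hJ K hK hne
    rw [Finset.disjoint_left]
    intro I hIJ hIK
    rw [Finset.mem_filter, Finset.mem_filter] at hIJ hIK
    have hIne : I.Nonempty := (hS.2.1 I hIJ.1.1).1
    obtain ⟨i, hi⟩ := hIne
    have : i ∈ J ∩ K := Finset.mem_inter.2 ⟨hIJ.1.2 hi, hIK.1.2 hi⟩
    rw [gsons_disj hS hJ hK hne] at this
    exact absurd this (Finset.notMem_empty i)
  rw [gW, hdecomp, Finset.prod_insert hBnot, Finset.prod_biUnion hdisj]
  congr 1
  apply Finset.prod_congr rfl
  intro J hJ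
  rw [gW]
  apply Finset.prod_congr rfl
  intro I hI
  rw [Finset.mem_filter, Finset.mem_filter] at hI
  rw [gsons_filter hI.1.2]


theorem mem_recon {B : Finset α} {A : Finset (Finset α)}
    (g : ∀ J ∈ A, Finset (Finset α)) {I : Finset α} :
    I ∈ insert B (A.attach.biUnion fun J => g J.1 J.2) ↔
      I = B ∨ ∃ J, ∃ hJ : J ∈ A, I ∈ g J hJ := by
  rw [Finset.mem_insert, Finset.mem_biUnion]
  constructor
  · rintro (h | ⟨⟨J, hJ⟩, _, hI⟩)
    · exact Or.inl h
    · exact Or.inr ⟨J, hJ, hI⟩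
  · rintro (h | ⟨J, hJ, hI⟩)
    · exact Or.inl h
    · exact Or.inr ⟨⟨J, hJ⟩, Finset.mem_attach _ _, hI⟩

theorem block_subset {B : Finset α} {A : Finset (Finset α)} (hA : IsPartOf B A)
    {J : Finset α} (hJ : J ∈ A) : J ⊆ B := by
  rw [← hA.2.2]
  exact Finset.subset_biUnion_of_mem id hJ

theorem block_ne_ground {B : Finset α} {A : Finset (Finset α)} (hA : IsPartOf B A)
    (h2 : 2 ≤ A.card) {J : Finset α} (hJ : J ∈ A) : J ≠ B := by
  obtain ⟨K, hK, hne⟩ := Finset.exists_mem_ne (show 1 < A.card by omega) J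
  intro h
  subst h
  have hKJ : K ⊆ J := block_subset hA hK
  obtain ⟨k, hk⟩ := hA.1 K hK
  have : k ∈ K ∩ J := Finset.mem_inter.2 ⟨hk, hKJ hk⟩
  rw [hA.2.1 K hK J hJ hne] at this
  exact absurd this (Finset.notMem_empty k)

theorem recon_nestOn {B : Finset α} {A : Finset (Finset α)} (hA : IsPartOf B A)
    (hB : B.Nonempty) (g : ∀ J ∈ A, Finset (Finset α))
    (hg : ∀ J (hJ : J ∈ A), NestOn J (g J hJ) ∧ gmax (g J hJ) = {J}) :
    NestOn B (insert B (A.attach.biUnion fun J => g J.1 J.2)) := by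
  have hmem : ∀ {I : Finset α} {J : Finset α} (hJ : J ∈ A), I ∈ g J hJ →
      I.Nonempty ∧ I ⊆ J := fun {I J} hJ hI => (hg J hJ).1.2.1 I hI
  refine ⟨fun i hi => ?_, fun I hI => ?_, fun I hI K hK => ?_⟩
  · have : i ∈ A.biUnion id := hA.2.2.symm ▸ hi
    rw [Finset.mem_biUnion] at this
    obtain ⟨J, hJ, hiJ⟩ := this
    exact (mem_recon g).2 (Or.inr ⟨J, hJ, (hg J hJ).1.1 i hiJ⟩)
  · rw [mem_recon g] at hI
    rcases hI with rfl | ⟨J, hJ, hI⟩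
    · exact ⟨hB, Finset.Subset.refl _⟩
    · exact ⟨(hmem hJ hI).1, (hmem hJ hI).2.trans (block_subset hA hJ)⟩
  · rw [mem_recon g] at hI hK
    rcases hI with rfl | ⟨J, hJ, hI⟩
    · rcases hK with rfl | ⟨J', hJ', hK⟩
      · exact Or.inr (Or.inl (Finset.Subset.refl _))
      · exact Or.inr (Or.inr ((hmem hJ' hK).2.trans (block_subset hA hJ')))
    · rcases hK with rfl | ⟨J', hJ', hK⟩
      · exact Or.inr (Or.inl ((hmem hJ hI).2.trans (block_subset hA hJ)))
      · rcases eq_or_ne J J' with rfl | hne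
        · exact (hg J hJ).1.2.2 I hI K hK
        · left
          have h1 : I ∩ K ⊆ J ∩ J' :=
            Finset.inter_subset_inter (hmem hJ hI).2 (hmem hJ' hK).2
          rw [hA.2.1 J hJ J' hJ' hne] at h1
          exact Finset.subset_empty.1 h1

theorem recon_gmax {B : Finset α} {A : Finset (Finset α)} (hA : IsPartOf B A)
    (hB : B.Nonempty) (g : ∀ J ∈ A, Finset (Finset α))
    (hg : ∀ J (hJ : J ∈ A), NestOn J (g J hJ) ∧ gmax (g J hJ) = {J}) :
    gmax (insert B (A.attach.biUnion fun J => g J.1 J.2)) = {B} := by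
  have hsub : ∀ {I : Finset α}, I ∈ insert B (A.attach.biUnion fun J => g J.1 J.2) →
      I ⊆ B := fun {I} hI => ((recon_nestOn hA hB g hg).2.1 I hI).2
  ext I
  rw [gmax, Finset.mem_filter, Finset.mem_singleton]
  constructor
  · rintro ⟨hI, hmax⟩
    exact hmax B (Finset.mem_insert_self _ _) (hsub hI)
  · rintro rfl
    exact ⟨Finset.mem_insert_self _ _,
      fun K hK hBK => Finset.Subset.antisymm hBK (hsub hK)⟩

theorem recon_gsons {B : Finset α} {A : Finset (Finset α)} (hA : IsPartOf B A)
    (h2 : 2 ≤ A.card) (g : ∀ J ∈ A, Finset (Finset α))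
    (hg : ∀ J (hJ : J ∈ A), NestOn J (g J hJ) ∧ gmax (g J hJ) = {J}) :
    gsons (insert B (A.attach.biUnion fun J => g J.1 J.2)) B = A := by
  have hmem : ∀ {I : Finset α} {J : Finset α} (hJ : J ∈ A), I ∈ g J hJ →
      I.Nonempty ∧ I ⊆ J := fun {I J} hJ hI => (hg J hJ).1.2.1 I hI
  have hself : ∀ {J : Finset α} (hJ : J ∈ A), J ∈ g J hJ :=
    fun {J} hJ => mem_ground_of_gmax (hg J hJ).2
  have hblk : ∀ {I J J' : Finset α} (hJ : J ∈ A) (hJ' : J' ∈ A),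
      I.Nonempty → I ⊆ J → I ⊆ J' → J = J' := by
    intro I J J' hJ hJ' hne h1 h2'
    by_contra hne'
    obtain ⟨i, hi⟩ := hne
    have : i ∈ J ∩ J' := Finset.mem_inter.2 ⟨h1 hi, h2' hi⟩
    rw [hA.2.1 J hJ J' hJ' hne'] at this
    exact absurd this (Finset.notMem_empty i)
  ext K
  rw [gsons, Finset.mem_filter]
  constructor
  · rintro ⟨hK, hKB, hmax⟩
    rw [mem_recon g] at hK
    rcases hK with rfl | ⟨J, hJ, hK⟩
    · exact absurd hKB (ssubset_irrefl _)
    · have hJmem : J ∈ insert B (A.attach.biUnion fun J => g J.1 J.2) :=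
        (mem_recon g).2 (Or.inr ⟨J, hJ, hself hJ⟩)
      have hJB : J ⊂ B := Finset.ssubset_iff_subset_ne.2
        ⟨block_subset hA hJ, block_ne_ground hA h2 hJ⟩
      have := hmax J hJmem hJB (hmem hJ hK).2
      subst this
      exact hJ
  · intro hK
    have hKmem : K ∈ insert B (A.attach.biUnion fun J => g J.1 J.2) :=
      (mem_recon g).2 (Or.inr ⟨K, hK, hself hK⟩)
    refine ⟨hKmem, Finset.ssubset_iff_subset_ne.2
      ⟨block_subset hA hK, block_ne_ground hA h2 hK⟩, ?_⟩
    intro L hL hLB hKL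
    rw [mem_recon g] at hL
    rcases hL with rfl | ⟨J', hJ', hL⟩
    · exact absurd hLB (ssubset_irrefl _)
    · have hKne : K.Nonempty := hA.1 K hK
      have hKJ' : K ⊆ J' := hKL.trans (hmem hJ' hL).2
      have := hblk hK hJ' hKne (Finset.Subset.refl K) hKJ'
      subst this
      exact Finset.Subset.antisymm hKL
        ((hmem hJ' hL).2.trans (Finset.Subset.refl _))

theorem recon_filter {B : Finset α} {A : Finset (Finset α)} (hA : IsPartOf B A)
    (h2 : 2 ≤ A.card) (g : ∀ J ∈ A, Finset (Finset α))
    (hg : ∀ J (hJ : J ∈ A), NestOn J (g J hJ) ∧ gmax (g J hJ) = {J})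
    {J : Finset α} (hJ : J ∈ A) :
    (insert B (A.attach.biUnion fun J => g J.1 J.2)).filter (· ⊆ J) = g J hJ := by
  ext I
  rw [Finset.mem_filter, mem_recon g]
  constructor
  · rintro ⟨rfl | ⟨J', hJ', hI⟩, hIJ⟩
    · exact absurd (Finset.Subset.antisymm (block_subset hA hJ) hIJ)
        (block_ne_ground hA h2 hJ)
    · have hIne : I.Nonempty := ((hg J' hJ').1.2.1 I hI).1
      have hIJ' : I ⊆ J' := ((hg J' hJ').1.2.1 I hI).2
      have : J' = J := by
        by_contra hne
        obtain ⟨i, hi⟩ := hIne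
        have : i ∈ J' ∩ J := Finset.mem_inter.2 ⟨hIJ' hi, hIJ hi⟩
        rw [hA.2.1 J' hJ' J hJ hne] at this
        exact absurd this (Finset.notMem_empty i)
      subst this
      exact hI
  · intro hI
    exact ⟨Or.inr ⟨J, hJ, hI⟩, ((hg J hJ).1.2.1 I hI).2⟩

theorem sigmaPoly_zero (d : ℕ) : sigmaPoly d 0 = 0 := by
  simp [sigmaPoly]

open Classical in
theorem hOn_rec {α : Type*} [DecidableEq α] [Fintype α] (d : ℕ) (B : Finset α)
    (h2 : 2 ≤ B.card) :
    hOn d B = ∑ A ∈ Finset.univ.filter (fun A => IsPartOf B A),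
      sigmaPoly d (A.card - 1) * ∏ J ∈ A, hOn d J := by
  classical
  have hB : B.Nonempty := Finset.card_pos.1 (by omega)
  -- throw away partitions with fewer than 2 parts
  rw [← Finset.sum_filter_add_sum_filter_not
    (Finset.univ.filter (fun A => IsPartOf B A)) (fun A => 2 ≤ A.card)]
  have hzero : ∑ A ∈ (Finset.univ.filter (fun A => IsPartOf B A)).filter
      (fun A => ¬ 2 ≤ A.card), sigmaPoly d (A.card - 1) * ∏ J ∈ A, hOn d J = 0 := by
    apply Finset.sum_eq_zero
    intro A hA
    rw [Finset.mem_filter, Finset.mem_filter] at hA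
    obtain ⟨⟨-, hpart⟩, hcard⟩ := hA
    interval_cases hc : A.card
    · exfalso
      rw [Finset.card_eq_zero] at hc
      subst hc
      simp only [IsPartOf, Finset.biUnion_empty] at hpart
      exact absurd hpart.2.2.symm (Finset.nonempty_iff_ne_empty.1 hB)
    · simp [sigmaPoly_zero]
  rw [hzero, add_zero]
  rw [Finset.filter_filter]
  -- expand the product of sums over nests on blocks
  have hexp : ∀ A ∈ Finset.univ.filter (fun A => IsPartOf B A ∧ 2 ≤ A.card),
      sigmaPoly d (A.card - 1) * ∏ J ∈ A, hOn d J
        = ∑ p ∈ A.pi (fun J => Finset.univ.filter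
            (fun S => NestOn J S ∧ gmax S = {J})),
            sigmaPoly d (A.card - 1) * ∏ x ∈ A.attach, gW d (p x.1 x.2) := by
    intro A hA
    have step1 : ∏ J ∈ A, hOn d J = ∏ J ∈ A, ∑ S ∈ Finset.univ.filter
        (fun S => NestOn J S ∧ gmax S = {J}), gW d S := by
      apply Finset.prod_congr rfl
      intro J _
      rw [hOn]
    rw [step1, Finset.prod_sum, Finset.mul_sum]
  rw [Finset.sum_congr rfl hexp, Finset.sum_sigma']
  -- now a bijection between nests and (partition, family of nests) pairs
  rw [hOn]
  apply Finset.sum_nbij'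
    (i := fun S => ⟨gsons S B, fun J _ => S.filter (· ⊆ J)⟩)
    (j := fun p => insert B (p.1.attach.biUnion fun J => p.2 J.1 J.2))
  · -- hi
    intro S hS
    rw [Finset.mem_filter] at hS
    obtain ⟨-, hnest, hmax⟩ := hS
    rw [Finset.mem_sigma, Finset.mem_filter]
    have hpart := gsons_isPart hnest hmax h2
    refine ⟨⟨Finset.mem_univ _, hpart, isPart_card_ge2 hpart
      (fun J hJ => (ssubset_of_mem_gsons hJ).ne) hB⟩, ?_⟩
    rw [Finset.mem_pi]
    intro J hJ
    rw [Finset.mem_filter]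
    exact ⟨Finset.mem_univ _, nestOn_filter hnest (gsons_subset S B hJ),
      gmax_filter hnest (gsons_subset S B hJ)⟩
  · -- hj
    rintro ⟨A, g⟩ hp
    rw [Finset.mem_sigma, Finset.mem_filter, Finset.mem_pi] at hp
    obtain ⟨⟨-, hpart, hc2⟩, hg⟩ := hp
    have hg' : ∀ J (hJ : J ∈ A), NestOn J (g J hJ) ∧ gmax (g J hJ) = {J} := by
      intro J hJ
      have := hg J hJ
      rw [Finset.mem_filter] at this
      exact ⟨this.2.1, this.2.2⟩
    rw [Finset.mem_filter]
    exact ⟨Finset.mem_univ _, recon_nestOn hpart hB g hg',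
      recon_gmax hpart hB g hg'⟩
  · -- left inverse
    intro S hS
    rw [Finset.mem_filter] at hS
    obtain ⟨-, hnest, hmax⟩ := hS
    have : (gsons S B).attach.biUnion (fun J => S.filter (· ⊆ J.1))
        = (gsons S B).biUnion (fun J => S.filter (· ⊆ J)) := by
      ext I
      simp only [Finset.mem_biUnion, Finset.mem_attach, true_and]
      exact ⟨fun ⟨⟨J, hJ⟩, hI⟩ => ⟨J, hJ, hI⟩, fun ⟨J, hJ, hI⟩ => ⟨⟨J, hJ⟩, hI⟩⟩
    rw [this, ← nest_decomp hnest hmax h2]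
  · -- right inverse
    rintro ⟨A, g⟩ hp
    rw [Finset.mem_sigma, Finset.mem_filter, Finset.mem_pi] at hp
    obtain ⟨⟨-, hpart, hc2⟩, hg⟩ := hp
    have hg' : ∀ J (hJ : J ∈ A), NestOn J (g J hJ) ∧ gmax (g J hJ) = {J} := by
      intro J hJ
      have := hg J hJ
      rw [Finset.mem_filter] at this
      exact ⟨this.2.1, this.2.2⟩
    have h1 : gsons (insert B (A.attach.biUnion fun J => g J.1 J.2)) B = A :=
      recon_gsons hpart hc2 g hg'
    refine Sigma.ext h1 ?_
    rw [h1]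
    refine heq_of_eq (funext fun J => funext fun hJ => ?_)
    exact recon_filter hpart hc2 g hg' hJ
  · -- weights agree
    intro S hS
    rw [Finset.mem_filter] at hS
    obtain ⟨-, hnest, hmax⟩ := hS
    rw [gW_decomp d hnest hmax h2]
    congr 1
    rw [Finset.prod_attach (gsons S B) (fun J => gW d (S.filter (· ⊆ J)))]

theorem hOn_empty {α : Type*} [DecidableEq α] [Fintype α] (d : ℕ) :
    hOn d (∅ : Finset α) = 0 := by
  classical
  rw [hOn]
  apply Finset.sum_eq_zero
  intro S hS
  rw [Finset.mem_filter] at hS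
  obtain ⟨-, hnest, hmax⟩ := hS
  exfalso
  have h1 : (∅ : Finset α) ∈ S := mem_ground_of_gmax hmax
  exact Finset.not_nonempty_empty (hnest.2.1 ∅ h1).1

section Transport

variable {α β : Type*} [DecidableEq α] [DecidableEq β]

theorem image_roundtrip {f : α → β} {g : β → α} {B : Finset α}
    (hgf : ∀ a ∈ B, g (f a) = a) {I : Finset α} (hI : I ⊆ B) :
    (I.image f).image g = I := by
  ext a
  simp only [Finset.mem_image]
  constructor
  · rintro ⟨b, ⟨a', ha', rfl⟩, rfl⟩
    rw [hgf a' (hI ha')]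
    exact ha'
  · intro ha
    exact ⟨f a, ⟨a, ha, rfl⟩, hgf a (hI ha)⟩

theorem nest_transport (d : ℕ) {f : α → β} {g : β → α} {B : Finset α} {C : Finset β}
    (hgf : ∀ a ∈ B, g (f a) = a) (hFB : B.image f = C)
    {S : Finset (Finset α)} (hnest : NestOn B S) (hmax : gmax S = {B}) :
    NestOn C (S.image (Finset.image f)) ∧ gmax (S.image (Finset.image f)) = {C}
      ∧ gW d (S.image (Finset.image f)) = gW d S := by
  classical
  have hsub : ∀ I ∈ S, I ⊆ B := fun I hI => (hnest.2.1 I hI).2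
  have rtI : ∀ {I : Finset α}, I ⊆ B → (I.image f).image g = I :=
    fun {I} hI => image_roundtrip hgf hI
  have monoIff : ∀ {I J : Finset α}, I ⊆ B → J ⊆ B →
      (I.image f ⊆ J.image f ↔ I ⊆ J) := by
    intro I J hI hJ
    constructor
    · intro hsub'
      have := Finset.image_subset_image (f := g) hsub'
      rwa [rtI hI, rtI hJ] at this
    · exact Finset.image_subset_image
  have injF : ∀ {I J : Finset α}, I ⊆ B → J ⊆ B → I.image f = J.image f → I = J := by
    intro I J hI hJ hIJ
    rw [← rtI hI, ← rtI hJ, hIJ]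
  have cardF : ∀ {I : Finset α}, I ⊆ B → (I.image f).card = I.card := by
    intro I hI
    apply Finset.card_image_of_injOn
    intro a ha a' ha' hfa
    rw [← hgf a (hI ha), ← hgf a' (hI ha'), hfa]
  have interF : ∀ {I J : Finset α}, I ⊆ B → J ⊆ B →
      I.image f ∩ J.image f = (I ∩ J).image f := by
    intro I J hI hJ
    ext b
    simp only [Finset.mem_inter, Finset.mem_image]
    constructor
    · rintro ⟨⟨a, ha, rfl⟩, ⟨a', ha', hfa'⟩⟩
      have : a' = a := by
        rw [← hgf a (hI ha), ← hgf a' (hJ ha'), hfa']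
      subst this
      exact ⟨a', ⟨ha, ha'⟩, rfl⟩
    · rintro ⟨a, ha, rfl⟩
      exact ⟨⟨a, ha.1, rfl⟩, ⟨a, ha.2, rfl⟩⟩
  have ssubF : ∀ {I J : Finset α}, I ⊆ B → J ⊆ B →
      (I.image f ⊂ J.image f ↔ I ⊂ J) := by
    intro I J hI hJ
    rw [Finset.ssubset_iff_subset_ne, Finset.ssubset_iff_subset_ne, monoIff hI hJ]
    constructor
    · rintro ⟨h1, h2⟩
      exact ⟨h1, fun h => h2 (h ▸ rfl)⟩
    · rintro ⟨h1, h2⟩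
      exact ⟨h1, fun h => h2 (injF hI hJ h)⟩
  have hmemC : ∀ {K : Finset β}, K ∈ S.image (Finset.image f) →
      ∃ I ∈ S, K = I.image f := by
    intro K hK
    rw [Finset.mem_image] at hK
    obtain ⟨I, hI, rfl⟩ := hK
    exact ⟨I, hI, rfl⟩
  have hn : NestOn C (S.image (Finset.image f)) := by
    refine ⟨fun c hc => ?_, fun K hK => ?_, fun K hK L hL => ?_⟩
    · rw [← hFB, Finset.mem_image] at hc
      obtain ⟨a, ha, rfl⟩ := hc
      rw [← Finset.image_singleton]
      exact Finset.mem_image_of_mem _ (hnest.1 a ha)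
    · obtain ⟨I, hI, rfl⟩ := hmemC hK
      refine ⟨Finset.image_nonempty.2 (hnest.2.1 I hI).1, ?_⟩
      rw [← hFB]
      exact Finset.image_subset_image (hsub I hI)
    · obtain ⟨I, hI, rfl⟩ := hmemC hK
      obtain ⟨J, hJ, rfl⟩ := hmemC hL
      rcases hnest.2.2 I hI J hJ with h | h | h
      · left
        rw [interF (hsub I hI) (hsub J hJ), h, Finset.image_empty]
      · exact Or.inr (Or.inl (Finset.image_subset_image h))
      · exact Or.inr (Or.inr (Finset.image_subset_image h))
  have hBS : B ∈ S := mem_ground_of_gmax hmax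
  have hm : gmax (S.image (Finset.image f)) = {C} := by
    ext K
    rw [gmax, Finset.mem_filter, Finset.mem_singleton]
    constructor
    · rintro ⟨hK, hmx⟩
      obtain ⟨I, hI, rfl⟩ := hmemC hK
      have hIB : I = B := by
        have hBmem : B.image f ∈ S.image (Finset.image f) :=
          Finset.mem_image_of_mem _ hBS
        have := hmx (B.image f) hBmem
          ((monoIff (hsub I hI) (hsub B hBS)).2 (hsub I hI))
        exact injF (hsub I hI) (hsub B hBS) this
      rw [hIB, hFB]
    · rintro rfl
      rw [← hFB]
      refine ⟨Finset.mem_image_of_mem _ hBS, ?_⟩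
      intro L hL hBL
      obtain ⟨J, hJ, rfl⟩ := hmemC hL
      rw [(monoIff (hsub B hBS) (hsub J hJ))] at hBL
      rw [Finset.Subset.antisymm hBL (hsub J hJ)]
  have hsons : ∀ {I : Finset α}, I ∈ S →
      gsons (S.image (Finset.image f)) (I.image f) = (gsons S I).image (Finset.image f) := by
    intro I hI
    ext K
    rw [Finset.mem_image]
    simp only [gsons, Finset.mem_filter]
    constructor
    · rintro ⟨hK, hKI, hmx⟩
      obtain ⟨J, hJ, rfl⟩ := hmemC hK
      rw [ssubF (hsub J hJ) (hsub I hI)] at hKI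
      refine ⟨J, ⟨hJ, hKI, fun L hL hLI hJL => ?_⟩, rfl⟩
      have := hmx (L.image f) (Finset.mem_image_of_mem _ hL)
        ((ssubF (hsub L hL) (hsub I hI)).2 hLI)
        ((monoIff (hsub J hJ) (hsub L hL)).2 hJL)
      exact injF (hsub J hJ) (hsub L hL) this
    · rintro ⟨J, ⟨hJ, hJI, hmx⟩, rfl⟩
      refine ⟨Finset.mem_image_of_mem _ hJ,
        (ssubF (hsub J hJ) (hsub I hI)).2 hJI, ?_⟩
      intro L hL hLI hJL
      obtain ⟨L', hL', rfl⟩ := hmemC hL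
      rw [ssubF (hsub L' hL') (hsub I hI)] at hLI
      rw [monoIff (hsub J hJ) (hsub L' hL')] at hJL
      rw [hmx L' hL' hLI hJL]
  have hw : gW d (S.image (Finset.image f)) = gW d S := by
    rw [gW, gW]
    have hfilter : (S.image (Finset.image f)).filter (fun K => 2 ≤ K.card)
        = (S.filter (fun I => 2 ≤ I.card)).image (Finset.image f) := by
      ext K
      simp only [Finset.mem_filter, Finset.mem_image]
      constructor
      · rintro ⟨⟨I, hI, rfl⟩, hc⟩
        rw [cardF (hsub I hI)] at hc
        exact ⟨I, ⟨hI, hc⟩, rfl⟩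
      · rintro ⟨I, ⟨hI, hc⟩, rfl⟩
        exact ⟨⟨I, hI, rfl⟩, by rw [cardF (hsub I hI)]; exact hc⟩
    rw [hfilter, Finset.prod_image]
    · apply Finset.prod_congr rfl
      intro I hI
      rw [Finset.mem_filter] at hI
      rw [hsons hI.1]
      congr 2
      apply Finset.card_image_of_injOn
      intro J hJ J' hJ' hJJ'
      exact injF (hsub J (gsons_subset S I hJ)) (hsub J' (gsons_subset S I hJ')) hJJ'
    · intro I hI J hJ hIJ
      rw [Finset.mem_coe, Finset.mem_filter] at hI hJ
      exact injF (hsub I hI.1) (hsub J hJ.1) hIJ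
  exact ⟨hn, hm, hw⟩

end Transport

theorem hOn_card_eq {α : Type*} [DecidableEq α] [Fintype α]
    {β : Type*} [DecidableEq β] [Fintype β] (d : ℕ) (B : Finset α) (C : Finset β)
    (h : B.card = C.card) : hOn d B = hOn d C := by
  classical
  rcases Finset.eq_empty_or_nonempty C with hC | hC
  · subst hC
    rw [Finset.card_empty, Finset.card_eq_zero] at h
    subst h
    rw [hOn_empty, hOn_empty]
  rcases Finset.eq_empty_or_nonempty B with hB | hB
  · exfalso
    subst hB
    rw [Finset.card_empty] at h
    have := Finset.card_pos.2 hC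
    omega
  obtain ⟨a₀, ha₀⟩ := hB
  obtain ⟨b₀, hb₀⟩ := hC
  have e : {x // x ∈ B} ≃ {x // x ∈ C} := by
    apply Fintype.equivOfCardEq
    rw [Fintype.card_coe, Fintype.card_coe, h]
  set f : α → β := fun a => if ha : a ∈ B then (e ⟨a, ha⟩ : β) else b₀ with hf
  set g : β → α := fun b => if hb : b ∈ C then (e.symm ⟨b, hb⟩ : α) else a₀ with hg
  have hfmem : ∀ a ∈ B, f a ∈ C := by
    intro a ha
    rw [hf]
    simp only [dif_pos ha]
    exact (e ⟨a, ha⟩).2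
  have hgmem : ∀ b ∈ C, g b ∈ B := by
    intro b hb
    rw [hg]
    simp only [dif_pos hb]
    exact (e.symm ⟨b, hb⟩).2
  have hgf : ∀ a ∈ B, g (f a) = a := by
    intro a ha
    have h1 : f a = ((e ⟨a, ha⟩ : {x // x ∈ C}) : β) := by rw [hf]; simp [dif_pos ha]
    have hm : f a ∈ C := hfmem a ha
    rw [hg]
    simp only [dif_pos hm]
    have : (⟨f a, hm⟩ : {x // x ∈ C}) = e ⟨a, ha⟩ := Subtype.ext h1
    rw [this, Equiv.symm_apply_apply]
  have hfg : ∀ b ∈ C, f (g b) = b := by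
    intro b hb
    have h1 : g b = ((e.symm ⟨b, hb⟩ : {x // x ∈ B}) : α) := by
      rw [hg]; simp [dif_pos hb]
    have hm : g b ∈ B := hgmem b hb
    rw [hf]
    simp only [dif_pos hm]
    have : (⟨g b, hm⟩ : {x // x ∈ B}) = e.symm ⟨b, hb⟩ := Subtype.ext h1
    rw [this, Equiv.apply_symm_apply]
  have hFB : B.image f = C := by
    apply Finset.eq_of_subset_of_card_le
    · intro b hb
      rw [Finset.mem_image] at hb
      obtain ⟨a, ha, rfl⟩ := hb
      exact hfmem a ha
    · rw [Finset.card_image_of_injOn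
        (fun a ha a' ha' hfa => by rw [← hgf a ha, ← hgf a' ha', hfa]), h]
  have hGC : C.image g = B := by
    apply Finset.eq_of_subset_of_card_le
    · intro a ha
      rw [Finset.mem_image] at ha
      obtain ⟨b, hb, rfl⟩ := ha
      exact hgmem b hb
    · rw [Finset.card_image_of_injOn
        (fun b hb b' hb' hgb => by rw [← hfg b hb, ← hfg b' hb', hgb]), h]
  rw [hOn, hOn]
  apply Finset.sum_nbij'
    (i := fun S => S.image (Finset.image f))
    (j := fun S => S.image (Finset.image g))
  · intro S hS
    rw [Finset.mem_filter] at hS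
    obtain ⟨-, hnest, hmax⟩ := hS
    have := nest_transport d hgf hFB hnest hmax
    rw [Finset.mem_filter]
    exact ⟨Finset.mem_univ _, this.1, this.2.1⟩
  · intro S hS
    rw [Finset.mem_filter] at hS
    obtain ⟨-, hnest, hmax⟩ := hS
    have := nest_transport d hfg hGC hnest hmax
    rw [Finset.mem_filter]
    exact ⟨Finset.mem_univ _, this.1, this.2.1⟩
  · intro S hS
    rw [Finset.mem_filter] at hS
    obtain ⟨-, hnest, -⟩ := hS
    apply image_roundtrip (f := Finset.image f) (g := Finset.image g)
      (B := B.powerset)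
    · intro I hI
      exact image_roundtrip hgf (Finset.mem_powerset.1 hI)
    · intro I hI
      exact Finset.mem_powerset.2 (hnest.2.1 I hI).2
  · intro S hS
    rw [Finset.mem_filter] at hS
    obtain ⟨-, hnest, -⟩ := hS
    apply image_roundtrip (f := Finset.image g) (g := Finset.image f)
      (B := C.powerset)
    · intro I hI
      exact image_roundtrip hfg (Finset.mem_powerset.1 hI)
    · intro I hI
      exact Finset.mem_powerset.2 (hnest.2.1 I hI).2
  · intro S hS
    rw [Finset.mem_filter] at hS
    obtain ⟨-, hnest, hmax⟩ := hS
    exact (nest_transport d hgf hFB hnest hmax).2.2.symm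

theorem sons_eq_gsons (n : ℕ) (S : Finset (Finset (Fin n))) (I : Finset (Fin n)) :
    sons n S I = gsons S I := by
  ext J
  simp [sons, gsons]

theorem maxElems_eq_gmax (n : ℕ) (S : Finset (Finset (Fin n))) :
    maxElems n S = gmax S := by
  ext I
  simp [maxElems, gmax]

theorem numMax_eq (n : ℕ) (S : Finset (Finset (Fin n))) :
    numMax n S = (gmax S).card := by
  rw [numMax, maxElems_eq_gmax]

theorem nestInterior_eq (n : ℕ) (S : Finset (Finset (Fin n))) :
    nestInterior n S = S.filter (fun I => 2 ≤ I.card) := by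
  ext I
  simp [nestInterior]

theorem inner_eq_gW (d n : ℕ) (S : Finset (Finset (Fin n))) :
    ∑ μ ∈ (nestInterior n S).pi
        (fun I => Finset.Icc 1 (d * ((sons n S I).card - 1) - 1)),
      (Polynomial.X : Polynomial ℤ) ^ (∑ I ∈ (nestInterior n S).attach, μ I.1 I.2)
      = gW d S := by
  classical
  have h1 : gW d S = ∏ I ∈ nestInterior n S,
      ∑ i ∈ Finset.Icc 1 (d * ((sons n S I).card - 1) - 1),
        (Polynomial.X : Polynomial ℤ) ^ i := by
    rw [gW, ← nestInterior_eq n S]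
    apply Finset.prod_congr rfl
    intro I _
    rw [sigmaPoly, sons_eq_gsons]
  rw [h1, Finset.prod_sum]
  apply Finset.sum_congr rfl
  intro p _
  rw [Finset.prod_pow_eq_pow_sum]

theorem nestOn_univ_iff {n : ℕ} (S : Finset (Finset (Fin n))) :
    NestOn Finset.univ S ↔ IsNest n S := by
  constructor
  · rintro ⟨h1, h2, h3⟩
    exact ⟨fun i => h1 i (Finset.mem_univ i), fun I hI => (h2 I hI).1, h3⟩
  · rintro ⟨h1, h2, h3⟩
    exact ⟨fun i _ => h1 i, fun I hI => ⟨h2 I hI, Finset.subset_univ I⟩, h3⟩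

theorem hpoly_eq_hOn (d n : ℕ) (hn : 1 ≤ n) :
    hpoly d n = hOn d (Finset.univ : Finset (Fin n)) := by
  classical
  rw [hpoly, hOn]
  have huniv : (Finset.univ : Finset (Fin n)).Nonempty := by
    exact ⟨⟨0, hn⟩, Finset.mem_univ _⟩
  apply Finset.sum_congr
  · ext S
    simp only [Finset.mem_filter, Finset.mem_univ, true_and]
    constructor
    · rintro ⟨h1, h2⟩
      have hnest := (nestOn_univ_iff S).2 h1
      rw [numMax_eq] at h2
      exact ⟨hnest, (gmax_card_one_iff hnest huniv).1 h2⟩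
    · rintro ⟨h1, h2⟩
      have hnest := (nestOn_univ_iff S).1 h1
      rw [numMax_eq]
      exact ⟨hnest, (gmax_card_one_iff h1 huniv).2 h2⟩
  · intro S _
    exact inner_eq_gW d n S

theorem hpoly_one (d : ℕ) : hpoly d 1 = 1 := by
  classical
  rw [hpoly_eq_hOn d 1 le_rfl, hOn]
  have hfilter : (Finset.univ.filter (fun S => NestOn (Finset.univ : Finset (Fin 1)) S
      ∧ gmax S = {Finset.univ})) = {({(Finset.univ : Finset (Fin 1))} :
        Finset (Finset (Fin 1)))} := by
    ext S
    simp only [Finset.mem_filter, Finset.mem_univ, true_and, Finset.mem_singleton]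
    constructor
    · rintro ⟨hnest, hmax⟩
      apply Finset.Subset.antisymm
      · intro I hI
        rw [Finset.mem_singleton]
        have h1 : I.Nonempty := (hnest.2.1 I hI).1
        have h2 : I ⊆ Finset.univ := Finset.subset_univ I
        apply Finset.eq_univ_of_card
        have ha := Finset.card_le_card h2
        have hb := Finset.card_pos.2 h1
        simp only [Finset.card_univ, Fintype.card_fin] at ha ⊢
        omega
      · intro I hI
        rw [Finset.mem_singleton] at hI
        subst hI
        exact mem_ground_of_gmax hmax
    · rintro rfl
      refine ⟨⟨fun i _ => ?_, fun I hI => ?_, fun I hI J hJ => ?_⟩, ?_⟩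
      · rw [Finset.mem_singleton]
        apply Finset.eq_univ_of_card
        simp
      · rw [Finset.mem_singleton] at hI
        subst hI
        exact ⟨Finset.univ_nonempty, Finset.Subset.refl _⟩
      · rw [Finset.mem_singleton] at hI hJ
        subst hI; subst hJ
        exact Or.inr (Or.inl (Finset.Subset.refl _))
      · ext I
        simp only [gmax, Finset.mem_filter, Finset.mem_singleton]
        constructor
        · rintro ⟨h, -⟩; exact h
        · rintro rfl
          exact ⟨rfl, fun J hJ _ => hJ.symm⟩
  rw [hfilter, Finset.sum_singleton, gW]
  have : ({(Finset.univ : Finset (Fin 1))} : Finset (Finset (Fin 1))).filter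
      (fun I => 2 ≤ I.card) = ∅ := by
    ext I
    simp only [Finset.mem_filter, Finset.mem_singleton, Finset.notMem_empty,
      iff_false, not_and]
    rintro rfl
    simp
  rw [this, Finset.prod_empty]

end Nests

/-! ### From partitions to the EGF recursion -/

section PT

variable {R : Type*} [CommRing R]

open Classical in
/-- Partition-sum: sum over partitions of `s` into `k` parts of products of `f` of sizes. -/
noncomputable def Psum {α : Type*} [DecidableEq α] [Fintype α] (f : ℕ → R)
    (s : Finset α) (k : ℕ) : R :=
  ∑ A ∈ Finset.univ.filter (fun A => IsPartOf s A ∧ A.card = k), ∏ J ∈ A, f J.card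

/-- Numerical ordered-partition sum. -/
noncomputable def Tnum (f : ℕ → R) : ℕ → ℕ → R
  | m, 0 => if m = 0 then 1 else 0
  | m, k+1 => ∑ a ∈ Finset.Icc 1 m, (m.choose a : R) * f a * Tnum f (m - a) k

open Classical in
/-- Set-indexed ordered partition sum. -/
noncomputable def Tset {α : Type*} [DecidableEq α] (f : ℕ → R) :
    ℕ → Finset α → R
  | 0, s => if s = ∅ then 1 else 0
  | k+1, s => ∑ B ∈ s.powerset.filter (fun B => B.Nonempty),
      f B.card * Tset f k (s \ B)

theorem Psum_step {α : Type*} [DecidableEq α] [Fintype α] (f : ℕ → R)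
    (k : ℕ) (s : Finset α) :
    ((k+1 : ℕ) : R) * Psum f s (k+1)
      = ∑ B ∈ s.powerset.filter (fun B => B.Nonempty),
          f B.card * Psum f (s \ B) k := by
  classical
  rw [Psum, Finset.mul_sum]
  have hL : ∀ A ∈ Finset.univ.filter (fun A => IsPartOf s A ∧ A.card = k+1),
      ((k+1 : ℕ) : R) * ∏ J ∈ A, f J.card
        = ∑ B ∈ A, ∏ J ∈ A, f J.card := by
    intro A hA
    rw [Finset.mem_filter] at hA
    rw [Finset.sum_const, ← hA.2.2, nsmul_eq_mul]
  rw [Finset.sum_congr rfl hL, Finset.sum_sigma']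
  have hR : ∀ B ∈ s.powerset.filter (fun B => B.Nonempty),
      f B.card * Psum f (s \ B) k
        = ∑ A' ∈ Finset.univ.filter (fun A' => IsPartOf (s \ B) A' ∧ A'.card = k),
            f B.card * ∏ J ∈ A', f J.card := by
    intro B _
    rw [Psum, Finset.mul_sum]
  rw [Finset.sum_congr rfl hR, Finset.sum_sigma']
  apply Finset.sum_nbij'
    (i := fun p => ⟨p.2, p.1.erase p.2⟩)
    (j := fun q => ⟨insert q.1 q.2, q.1⟩)
  · rintro ⟨A, B⟩ hp
    rw [Finset.mem_sigma, Finset.mem_filter] at hp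
    obtain ⟨⟨-, hpart, hcard⟩, hB⟩ := hp
    rw [Finset.mem_sigma, Finset.mem_filter, Finset.mem_powerset, Finset.mem_filter]
    have hBs : B ⊆ s := by
      rw [← hpart.2.2]
      exact Finset.subset_biUnion_of_mem id hB
    refine ⟨⟨hBs, hpart.1 B hB⟩, Finset.mem_univ _, ⟨?_, ?_, ?_⟩, ?_⟩
    · exact fun J hJ => hpart.1 J (Finset.mem_of_mem_erase hJ)
    · exact fun J hJ K hK hne => hpart.2.1 J (Finset.mem_of_mem_erase hJ)
        K (Finset.mem_of_mem_erase hK) hne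
    · ext x
      rw [Finset.mem_biUnion, Finset.mem_sdiff]
      constructor
      · rintro ⟨J, hJ, hx⟩
        have hJA := Finset.mem_of_mem_erase hJ
        refine ⟨hpart.2.2 ▸ Finset.mem_biUnion.2 ⟨J, hJA, hx⟩, fun hxB => ?_⟩
        have : x ∈ J ∩ B := Finset.mem_inter.2 ⟨hx, hxB⟩
        rw [hpart.2.1 J hJA B hB (Finset.ne_of_mem_erase hJ)] at this
        exact absurd this (Finset.notMem_empty x)
      · rintro ⟨hxs, hxB⟩
        rw [← hpart.2.2, Finset.mem_biUnion] at hxs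
        obtain ⟨J, hJ, hx⟩ := hxs
        refine ⟨J, Finset.mem_erase.2 ⟨fun h => hxB (h ▸ hx), hJ⟩, hx⟩
    · rw [Finset.card_erase_of_mem hB, hcard]
      rfl
  · rintro ⟨B, A'⟩ hq
    rw [Finset.mem_sigma, Finset.mem_filter, Finset.mem_powerset,
      Finset.mem_filter] at hq
    obtain ⟨⟨hBs, hBne⟩, -, hpart, hcard⟩ := hq
    have hBnotin : B ∉ A' := by
      intro h
      obtain ⟨b, hb⟩ := hBne
      have : b ∈ s \ B := by
        rw [← hpart.2.2]
        exact Finset.mem_biUnion.2 ⟨B, h, hb⟩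
      exact (Finset.mem_sdiff.1 this).2 hb
    rw [Finset.mem_sigma, Finset.mem_filter]
    have hdisjB : ∀ J ∈ A', J ∩ B = ∅ := by
      intro J hJ
      have hJsub : J ⊆ s \ B := by
        rw [← hpart.2.2]
        exact Finset.subset_biUnion_of_mem id hJ
      ext x
      simp only [Finset.mem_inter, Finset.notMem_empty, iff_false, not_and]
      exact fun hx => (Finset.mem_sdiff.1 (hJsub hx)).2
    refine ⟨⟨Finset.mem_univ _, ⟨?_, ?_, ?_⟩, ?_⟩, Finset.mem_insert_self _ _⟩
    · intro J hJ
      rcases Finset.mem_insert.1 hJ with rfl | hJ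
      · exact hBne
      · exact hpart.1 J hJ
    · intro J hJ K hK hne
      rcases Finset.mem_insert.1 hJ with rfl | hJ' <;>
        rcases Finset.mem_insert.1 hK with rfl | hK'
      · exact absurd rfl hne
      · rw [Finset.inter_comm]; exact hdisjB K hK'
      · exact hdisjB J hJ'
      · exact hpart.2.1 J hJ' K hK' hne
    · rw [Finset.biUnion_insert, hpart.2.2]
      simpa using Finset.union_sdiff_of_subset hBs
    · rw [Finset.card_insert_of_notMem hBnotin, hcard]
  · rintro ⟨A, B⟩ hp
    rw [Finset.mem_sigma, Finset.mem_filter] at hp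
    simp only
    rw [Finset.insert_erase hp.2]
  · rintro ⟨B, A'⟩ hq
    rw [Finset.mem_sigma, Finset.mem_filter, Finset.mem_powerset,
      Finset.mem_filter] at hq
    obtain ⟨⟨hBs, hBne⟩, -, hpart, hcard⟩ := hq
    have hBnotin : B ∉ A' := by
      intro h
      obtain ⟨b, hb⟩ := hBne
      have : b ∈ s \ B := by
        rw [← hpart.2.2]
        exact Finset.mem_biUnion.2 ⟨B, h, hb⟩
      exact (Finset.mem_sdiff.1 this).2 hb
    simp only
    rw [Finset.erase_insert hBnotin]
  · rintro ⟨A, B⟩ hp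
    rw [Finset.mem_sigma, Finset.mem_filter] at hp
    simp only
    exact (Finset.mul_prod_erase A (fun J => f J.card) hp.2).symm

theorem Tset_eq_fact_mul_Psum {α : Type*} [DecidableEq α] [Fintype α] (f : ℕ → R)
    (k : ℕ) (s : Finset α) :
    (k.factorial : R) * Psum f s k = Tset f k s := by
  classical
  induction k generalizing s with
  | zero =>
    rw [Nat.factorial_zero, Nat.cast_one, one_mul, Psum, Tset]
    by_cases hs : s = ∅
    · subst hs
      rw [if_pos rfl]
      have : (Finset.univ.filter
          (fun A : Finset (Finset α) => IsPartOf ∅ A ∧ A.card = 0)) = {∅} := by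
        ext A
        simp only [Finset.mem_filter, Finset.mem_univ, true_and,
          Finset.mem_singleton, Finset.card_eq_zero]
        constructor
        · rintro ⟨-, h⟩; exact h
        · rintro rfl
          exact ⟨⟨fun J hJ => absurd hJ (Finset.notMem_empty J),
            fun J hJ => absurd hJ (Finset.notMem_empty J).elim,
            Finset.biUnion_empty⟩, rfl⟩
      rw [this, Finset.sum_singleton, Finset.prod_empty]
    · rw [if_neg hs]
      apply Finset.sum_eq_zero
      intro A hA
      rw [Finset.mem_filter, Finset.card_eq_zero] at hA
      obtain ⟨-, hpart, rfl⟩ := hA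
      exact absurd (hpart.2.2.symm.trans Finset.biUnion_empty) hs
  | succ k ih =>
    rw [Tset]
    have : ((k+1).factorial : R) = (k.factorial : R) * ((k+1 : ℕ) : R) := by
      rw [Nat.factorial_succ, Nat.cast_mul, mul_comm]
    rw [this, mul_assoc, Psum_step f k s, Finset.mul_sum]
    apply Finset.sum_congr rfl
    intro B _
    rw [← ih (s \ B)]
    ring

theorem Tset_eq_Tnum {α : Type*} [DecidableEq α] [Fintype α] (f : ℕ → R)
    (k : ℕ) (s : Finset α) : Tset f k s = Tnum f s.card k := by
  classical
  induction k generalizing s with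
  | zero =>
    rw [Tset, Tnum]
    by_cases hs : s = ∅
    · rw [if_pos hs, if_pos (by rw [hs]; exact Finset.card_empty)]
    · rw [if_neg hs, if_neg (fun h => hs (Finset.card_eq_zero.1 h))]
  | succ k ih =>
    rw [Tset, Tnum, Finset.sum_filter, Finset.sum_powerset]
    have hinner : ∀ j ∈ Finset.range (s.card + 1),
        ∑ B ∈ Finset.powersetCard j s,
          (if B.Nonempty then f B.card * Tset f k (s \ B) else 0)
        = if j = 0 then 0 else ((s.card.choose j : ℕ) : R) * f j * Tnum f (s.card - j) k := by
      intro j hj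
      by_cases hj0 : j = 0
      · subst hj0
        rw [if_pos rfl]
        apply Finset.sum_eq_zero
        intro B hB
        rw [Finset.mem_powersetCard] at hB
        rw [if_neg]
        rw [Finset.card_eq_zero] at hB
        rw [hB.2]
        exact fun h => (Finset.not_nonempty_empty h)
      · rw [if_neg hj0]
        have hconst : ∀ B ∈ Finset.powersetCard j s,
            (if B.Nonempty then f B.card * Tset f k (s \ B) else 0)
              = f j * Tnum f (s.card - j) k := by
          intro B hB
          rw [Finset.mem_powersetCard] at hB
          have hBne : B.Nonempty := by
            rw [← Finset.card_pos, hB.2]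
            omega
          rw [if_pos hBne, ih (s \ B), Finset.card_sdiff_of_subset hB.1, hB.2]
        rw [Finset.sum_congr rfl hconst, Finset.sum_const,
          Finset.card_powersetCard, nsmul_eq_mul, mul_assoc]
    rw [Finset.sum_congr rfl hinner]
    have hrange : Finset.range (s.card + 1) = insert 0 (Finset.Icc 1 s.card) := by
      ext j
      simp only [Finset.mem_range, Finset.mem_insert, Finset.mem_Icc]
      omega
    rw [hrange, Finset.sum_insert (by simp), if_pos rfl, zero_add]
    apply Finset.sum_congr rfl
    intro j hj
    rw [Finset.mem_Icc] at hj
    rw [if_neg (by omega)]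

theorem factorial_mul_Psum {α : Type*} [DecidableEq α] [Fintype α] (f : ℕ → R)
    (k : ℕ) (s : Finset α) :
    (k.factorial : R) * Psum f s k = Tnum f s.card k := by
  rw [Tset_eq_fact_mul_Psum, Tset_eq_Tnum]

end PT

theorem sigmaPoly_mul (d m : ℕ) (hd : 1 ≤ d) (hm : 1 ≤ m) :
    sigmaPoly d m * (Polynomial.X - 1)
      = Polynomial.X ^ (d * m) - Polynomial.X := by
  have hs : 1 ≤ d * m := Nat.one_le_iff_ne_zero.2 (by positivity)
  have h1 : sigmaPoly d m
      = (∑ i ∈ Finset.range (d * m), (Polynomial.X : Polynomial ℤ) ^ i) - 1 := by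
    rw [sigmaPoly]
    have : Finset.range (d * m) = insert 0 (Finset.Icc 1 (d * m - 1)) := by
      ext i
      simp only [Finset.mem_range, Finset.mem_insert, Finset.mem_Icc]
      omega
    rw [this, Finset.sum_insert (by simp), pow_zero]
    ring
  rw [h1, sub_mul, geom_sum_mul, one_mul]
  ring

theorem map_Psum {R R' : Type*} [CommRing R] [CommRing R'] (ψ : R →+* R')
    {α : Type*} [DecidableEq α] [Fintype α] (f : ℕ → R) (s : Finset α) (k : ℕ) :
    ψ (Psum f s k) = Psum (fun m => ψ (f m)) s k := by
  rw [Psum, Psum, map_sum]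
  exact Finset.sum_congr rfl (fun A _ => map_prod ψ _ _)

theorem Psum_zero {R : Type*} [CommRing R] {α : Type*} [DecidableEq α] [Fintype α]
    (f : ℕ → R) {s : Finset α} (hs : s.Nonempty) : Psum f s 0 = 0 := by
  have h := Tset_eq_fact_mul_Psum f 0 s
  rw [Tset, if_neg (Finset.nonempty_iff_ne_empty.1 hs)] at h
  rw [Nat.factorial_zero, Nat.cast_one, one_mul] at h
  exact h

theorem Psum_one {R : Type*} [CommRing R] {α : Type*} [DecidableEq α] [Fintype α]
    (f : ℕ → R) {s : Finset α} (hs : s.Nonempty) : Psum f s 1 = f s.card := by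
  classical
  rw [Psum]
  have hfilter : (Finset.univ.filter
      (fun A : Finset (Finset α) => IsPartOf s A ∧ A.card = 1)) = {{s}} := by
    ext A
    simp only [Finset.mem_filter, Finset.mem_univ, true_and, Finset.mem_singleton]
    constructor
    · rintro ⟨hpart, hcard⟩
      obtain ⟨J, rfl⟩ := Finset.card_eq_one.1 hcard
      have : J = s := by simpa using hpart.2.2
      rw [this]
    · rintro rfl
      refine ⟨⟨?_, ?_, ?_⟩, Finset.card_singleton s⟩
      · intro J hJ
        rw [Finset.mem_singleton] at hJ
        rw [hJ]; exact hs
      · intro J hJ K hK hne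
        rw [Finset.mem_singleton] at hJ hK
        exact absurd (hJ.trans hK.symm) hne
      · simp
  rw [hfilter, Finset.sum_singleton, Finset.prod_singleton]

theorem hpoly_rec (d n : ℕ) (hn : 2 ≤ n) :
    hpoly d n = ∑ k ∈ Finset.range (n+1),
      sigmaPoly d (k-1)
        * Psum (fun m => hpoly d m) (Finset.univ : Finset (Fin n)) k := by
  classical
  rw [hpoly_eq_hOn d n (by omega),
    hOn_rec d Finset.univ (by rw [Finset.card_fin]; omega)]
  have hcards : ∀ A ∈ Finset.univ.filter
      (fun A => IsPartOf (Finset.univ : Finset (Fin n)) A),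
      sigmaPoly d (A.card - 1) * ∏ J ∈ A, hOn d J
        = sigmaPoly d (A.card - 1) * ∏ J ∈ A, hpoly d J.card := by
    intro A hA
    rw [Finset.mem_filter] at hA
    congr 1
    apply Finset.prod_congr rfl
    intro J hJ
    have hJne : J.Nonempty := hA.2.1 J hJ
    rw [hOn_card_eq d J (Finset.univ : Finset (Fin J.card))
      (by rw [Finset.card_fin]), ← hpoly_eq_hOn d J.card (Finset.card_pos.2 hJne)]
  rw [Finset.sum_congr rfl hcards]
  have hmaps : ∀ A ∈ Finset.univ.filter
      (fun A => IsPartOf (Finset.univ : Finset (Fin n)) A),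
      A.card ∈ Finset.range (n+1) := by
    intro A hA
    rw [Finset.mem_filter] at hA
    rw [Finset.mem_range]
    have hle : A.card ≤ (Finset.univ : Finset (Fin n)).card := by
      have hdisj : ∀ J ∈ A, ∀ K ∈ A, J ≠ K → Disjoint J K := by
        intro J hJ K hK hne
        rw [Finset.disjoint_iff_inter_eq_empty]
        exact hA.2.2.1 J hJ K hK hne
      calc A.card = ∑ _J ∈ A, 1 := by rw [Finset.sum_const, smul_eq_mul, mul_one]
        _ ≤ ∑ J ∈ A, J.card := Finset.sum_le_sum
            (fun J hJ => Finset.card_pos.2 (hA.2.1 J hJ))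
        _ = (A.biUnion id).card := (Finset.card_biUnion hdisj).symm
        _ = (Finset.univ : Finset (Fin n)).card := by rw [hA.2.2.2]
    rw [Finset.card_fin] at hle
    omega
  have hfib : ∑ k ∈ Finset.range (n+1),
      ∑ A ∈ (Finset.univ.filter
        (fun A => IsPartOf (Finset.univ : Finset (Fin n)) A)).filter
          (fun A => A.card = k),
        sigmaPoly d (A.card - 1) * ∏ J ∈ A, hpoly d J.card
      = ∑ A ∈ Finset.univ.filter
          (fun A => IsPartOf (Finset.univ : Finset (Fin n)) A),
          sigmaPoly d (A.card - 1) * ∏ J ∈ A, hpoly d J.card :=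
    Finset.sum_fiberwise_of_maps_to hmaps _
  rw [← hfib]
  apply Finset.sum_congr rfl
  intro k _
  rw [Psum, Finset.mul_sum]
  apply Finset.sum_congr
  · ext A
    simp only [Finset.mem_filter, Finset.mem_univ, true_and, and_assoc]
  · intro A hA
    simp only [Finset.mem_filter] at hA
    rw [hA.2.2]

/-! ### Analytic part -/

/-- The map `ℤ[x] → ℚ(x)`. -/
noncomputable def phiK : Polynomial ℤ →+* RatFunc ℚ :=
  (algebraMap (Polynomial ℚ) (RatFunc ℚ)).comp (Polynomial.mapRingHom (Int.castRingHom ℚ))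

theorem Npow_coeff (d i : ℕ) : PowerSeries.coeff (R := RatFunc ℚ) i (Npow d)
    = if i = 0 then 0 else phiK (hpoly d i) / (i.factorial : RatFunc ℚ) := by
  rw [Npow, PowerSeries.coeff_mk]
  rfl

theorem phiK_X : phiK Polynomial.X = RatFunc.X := by
  rw [phiK, RingHom.comp_apply, Polynomial.coe_mapRingHom, Polynomial.map_X,
    RatFunc.algebraMap_X]

theorem fact_ne_zero (m : ℕ) : ((m.factorial : RatFunc ℚ)) ≠ 0 := by
  haveI : CharZero (RatFunc ℚ) :=
    charZero_of_injective_algebraMap (algebraMap ℚ (RatFunc ℚ)).injective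
  exact Nat.cast_ne_zero.2 (Nat.factorial_ne_zero m)

theorem coeff_pow_Npow (d : ℕ) : ∀ k n : ℕ,
    (n.factorial : RatFunc ℚ) * PowerSeries.coeff (R := RatFunc ℚ) n ((Npow d)^k)
      = Tnum (fun i => phiK (hpoly d i)) n k := by
  intro k
  induction k with
  | zero =>
    intro n
    rw [pow_zero, PowerSeries.coeff_one, Tnum]
    by_cases hn : n = 0
    · subst hn
      simp
    · simp [hn]
  | succ k ih =>
    intro n
    rw [pow_succ', PowerSeries.coeff_mul,
      Finset.Nat.sum_antidiagonal_eq_sum_range_succ_mk, Finset.mul_sum]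
    have hterm : ∀ a ∈ Finset.range (n+1),
        (n.factorial : RatFunc ℚ) * (PowerSeries.coeff (R := RatFunc ℚ) a (Npow d)
          * PowerSeries.coeff (R := RatFunc ℚ) (n - a) ((Npow d)^k))
        = if a = 0 then 0 else ((n.choose a : ℕ) : RatFunc ℚ)
            * phiK (hpoly d a) * Tnum (fun i => phiK (hpoly d i)) (n - a) k := by
      intro a ha
      rw [Finset.mem_range] at ha
      rw [Npow_coeff]
      by_cases ha0 : a = 0
      · rw [if_pos ha0, if_pos ha0, zero_mul, mul_zero]
      · rw [if_neg ha0, if_neg ha0]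
        have hfac : (n.factorial : RatFunc ℚ)
            = ((n.choose a : ℕ) : RatFunc ℚ) * (a.factorial : RatFunc ℚ)
              * ((n - a).factorial : RatFunc ℚ) := by
          have := Nat.choose_mul_factorial_mul_factorial (show a ≤ n by omega)
          have hq := congrArg (fun m : ℕ => (m : RatFunc ℚ)) this
          push_cast at hq ⊢
          rw [← hq]
        rw [hfac, ← ih (n - a)]
        have ha' := fact_ne_zero a
        field_simp
    rw [Finset.sum_congr rfl hterm]
    have hrange : Finset.range (n+1) = insert 0 (Finset.Icc 1 n) := by
      ext j
      simp only [Finset.mem_range, Finset.mem_insert, Finset.mem_Icc]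
      omega
    rw [hrange, Finset.sum_insert (by simp), if_pos rfl, zero_add, Tnum]
    apply Finset.sum_congr rfl
    intro a ha
    rw [Finset.mem_Icc] at ha
    rw [if_neg (by omega)]

/-- The functional equation
`(1 - x)x^d t + (1 - x^{d+1}) = exp(x^d N) - x^{d+1} exp(N)`. -/
theorem stmt9 (d : ℕ) (hd : 1 ≤ d) :
    PowerSeries.C (R := RatFunc ℚ) ((1 - RatFunc.X) * RatFunc.X ^ d) * PowerSeries.X
        + PowerSeries.C (R := RatFunc ℚ) (1 - RatFunc.X ^ (d + 1)) =
      pexp (PowerSeries.C (R := RatFunc ℚ) (RatFunc.X ^ d) * Npow d)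
        - PowerSeries.C (R := RatFunc ℚ) (RatFunc.X ^ (d + 1)) * pexp (Npow d) := by
  classical
  set K := RatFunc ℚ
  set x : K := RatFunc.X with hx
  set h : ℕ → K := fun i => phiK (hpoly d i) with hh
  have hsmul : ∀ (k : ℕ) (y : K),
      @HSMul.hSMul ℚ K K (@instHSMul ℚ K (@Algebra.toSMul ℚ K _ _ DivisionRing.toRatAlgebra))
        (k.factorial : ℚ)⁻¹ y
      = ((k.factorial : K))⁻¹ * y := by
    intro k y
    rw [Algebra.smul_def, map_inv₀, map_natCast]
  have h1 : h 1 = 1 := by rw [hh]; simp only; rw [hpoly_one, map_one]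
  -- rewrite the sigma polynomials
  have hsig : ∀ k : ℕ, 2 ≤ k → x^d * (x - 1) * phiK (sigmaPoly d (k-1))
      = x^(d*k) - x^(d+1) := by
    intro k hk
    have hmul := congrArg phiK (sigmaPoly_mul d (k-1) hd (by omega))
    rw [map_mul, map_sub, map_sub, map_one, map_pow, phiK_X] at hmul
    have hdk : d + d * (k - 1) = d * k := by
      conv_rhs => rw [show k = (k - 1) + 1 by omega]
      rw [Nat.mul_succ]
      omega
    have : x^d * (x^(d*(k-1)) - x) = x^(d*k) - x^(d+1) := by
      rw [mul_sub, ← pow_add, ← pow_succ, hdk]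
    calc x^d * (x - 1) * phiK (sigmaPoly d (k-1))
        = x^d * (phiK (sigmaPoly d (k-1)) * (x - 1)) := by ring
      _ = x^d * (x^(d*(k-1)) - x) := by rw [hmul]
      _ = x^(d*k) - x^(d+1) := this
  apply PowerSeries.ext
  intro n
  -- coefficient of the left-hand side
  rw [map_add, PowerSeries.coeff_C_mul, PowerSeries.coeff_X, PowerSeries.coeff_C]
  -- coefficient of the right-hand side
  rw [map_sub, PowerSeries.coeff_C_mul, pexp, pexp, PowerSeries.coeff_mk,
    PowerSeries.coeff_mk, Finset.mul_sum, ← Finset.sum_sub_distrib]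
  have hterm : ∀ k ∈ Finset.range (n+1),
      (@HSMul.hSMul ℚ K K (@instHSMul ℚ K (@Algebra.toSMul ℚ K _ _ DivisionRing.toRatAlgebra))
          (k.factorial : ℚ)⁻¹ (PowerSeries.coeff (R := K) n
          ((PowerSeries.C (R := K) (RatFunc.X ^ d) * Npow d) ^ k))
        - RatFunc.X ^ (d+1) * (@HSMul.hSMul ℚ K K
          (@instHSMul ℚ K (@Algebra.toSMul ℚ K _ _ DivisionRing.toRatAlgebra))
          (k.factorial : ℚ)⁻¹ (PowerSeries.coeff (R := K) n ((Npow d) ^ k))))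
      = ((k.factorial : K))⁻¹ * ((x^(d*k) - x^(d+1))
          * PowerSeries.coeff (R := K) n ((Npow d)^k)) := by
    intro k _
    rw [mul_pow, ← map_pow, PowerSeries.coeff_C_mul, hsmul, hsmul, ← pow_mul]
    rw [← hx]
    ring
  rw [Finset.sum_congr rfl hterm]
  rcases Nat.lt_or_ge n 2 with hn2 | hn2
  · interval_cases n
    · -- n = 0
      rw [if_neg (by omega), if_pos rfl, mul_zero, zero_add]
      rw [show Finset.range 1 = {0} from rfl, Finset.sum_singleton]
      rw [pow_zero, PowerSeries.coeff_one, if_pos rfl, Nat.factorial_zero,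
        Nat.cast_one, inv_one, one_mul, mul_one, mul_zero, pow_zero]
    · -- n = 1
      rw [if_pos rfl, if_neg (by omega), mul_one, add_zero]
      rw [show Finset.range 2 = {0, 1} from rfl,
        Finset.sum_insert (by simp), Finset.sum_singleton]
      rw [pow_zero, PowerSeries.coeff_one, if_neg (by omega), mul_zero, mul_zero,
        zero_add, pow_one, Npow_coeff, if_neg (by omega)]
      rw [Nat.factorial_one, Nat.cast_one, inv_one, one_mul, div_one, mul_one]
      have : phiK (hpoly d 1) = 1 := h1
      rw [this, mul_one]
      ring
  · -- n ≥ 2 : both sides vanish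
    haveI : Nonempty (Fin n) := ⟨⟨0, by omega⟩⟩
    rw [if_neg (by omega), if_neg (by omega), mul_zero, add_zero]
    have hcoeff : ∀ k, PowerSeries.coeff (R := K) n ((Npow d)^k)
        = ((n.factorial : K))⁻¹ * ((k.factorial : K)
            * Psum h (Finset.univ : Finset (Fin n)) k) := by
      intro k
      have e1 := coeff_pow_Npow d k n
      have e2 := factorial_mul_Psum (α := Fin n) h k (Finset.univ : Finset (Fin n))
      rw [Finset.card_fin] at e2
      rw [← e2] at e1
      rw [← e1, inv_mul_cancel_left₀ (fact_ne_zero n)]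
    have hsum : ∀ k ∈ Finset.range (n+1),
        ((k.factorial : K))⁻¹ * ((x^(d*k) - x^(d+1))
          * PowerSeries.coeff (R := K) n ((Npow d)^k))
        = ((n.factorial : K))⁻¹ * ((x^(d*k) - x^(d+1))
            * Psum h (Finset.univ : Finset (Fin n)) k) := by
      intro k _
      rw [hcoeff k]
      have hk := fact_ne_zero k
      calc ((k.factorial : K))⁻¹ * ((x^(d*k) - x^(d+1))
            * (((n.factorial : K))⁻¹ * ((k.factorial : K)
              * Psum h (Finset.univ : Finset (Fin n)) k)))
          = ((n.factorial : K))⁻¹ * ((x^(d*k) - x^(d+1))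
              * Psum h (Finset.univ : Finset (Fin n)) k)
            * (((k.factorial : K))⁻¹ * (k.factorial : K)) := by ring
        _ = ((n.factorial : K))⁻¹ * ((x^(d*k) - x^(d+1))
              * Psum h (Finset.univ : Finset (Fin n)) k) := by
            rw [inv_mul_cancel₀ hk, mul_one]
    rw [Finset.sum_congr rfl hsum, ← Finset.mul_sum]
    have hPn0 : Psum h (Finset.univ : Finset (Fin n)) 0 = 0 :=
      Psum_zero h Finset.univ_nonempty
    have hPn1 : Psum h (Finset.univ : Finset (Fin n)) 1 = h n := by
      rw [Psum_one h Finset.univ_nonempty, Finset.card_fin]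
    have hrec : h n = ∑ k ∈ Finset.range (n+1), phiK (sigmaPoly d (k-1))
        * Psum h (Finset.univ : Finset (Fin n)) k := by
      rw [hh]
      simp only
      rw [hpoly_rec d n hn2, map_sum]
      apply Finset.sum_congr rfl
      intro k _
      rw [map_mul, map_Psum]
    have hrange : Finset.range (n+1) = insert 0 (insert 1 (Finset.Ico 2 (n+1))) := by
      ext j
      simp only [Finset.mem_range, Finset.mem_insert, Finset.mem_Ico]
      omega
    have hsig0 : phiK (sigmaPoly d 0) = 0 := by rw [sigmaPoly_zero, map_zero]
    rw [hrange, Finset.sum_insert (by simp), Finset.sum_insert (by simp)] at hrec ⊢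
    rw [hsig0, zero_mul, zero_mul, zero_add, zero_add] at hrec
    have hIco : ∑ k ∈ Finset.Ico 2 (n+1), (x^(d*k) - x^(d+1))
        * Psum h (Finset.univ : Finset (Fin n)) k
        = x^d * (x-1) * h n := by
      rw [hrec, Finset.mul_sum]
      apply Finset.sum_congr rfl
      intro k hk
      rw [Finset.mem_Ico] at hk
      rw [← hsig (k := k) (by omega)]
      ring
    rw [hIco, hPn0, hPn1, mul_zero, zero_add]
    symm
    rw [mul_eq_zero]
    right
    have : d * 1 = d := by omega
    rw [this]
    ring
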